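/- Suppose φ_α is increasing on [0,1], has a unique fixed point x ∈ (0,1), and φ_α′(x) < 1. Then D_α < 1, where D_α = sup_{y ∈ [0,1], y ≠ x} |φ_α(y) − x| / |y − x|. -/
import Mathlib


open MeasureTheory ProbabilityTheory Real Set

noncomputable section

/-- The real-valued vertex configuration associated to a boolean configuration. -/
def boolToR (n : ℕ) (X : Fin n → Bool) : Fin n → ℝ := fun i => if X i then 1 else 0

/-- The 1-norm on ℝⁿ. -/
def norm1 (n : ℕ) (x : Fin n → ℝ) : ℝ := ∑ i, |x i|

/-- `C_j^m(X)`: the sum over (m-1)-tuples of pairwise distinct indices, all distinct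
from `j`, of the products of the corresponding entries of `X`; `C_j^1 = 1`. -/
def Cvec (n m : ℕ) (X : Fin n → ℝ) (j : Fin n) : ℝ :=
  ∑ g ∈ Finset.univ.filter (fun g : Fin (m - 1) ↪ Fin n => ∀ k, g k ≠ j),
    ∏ k, X (g k)

/-- The subgraph counting function with parameters `p`, `m₁,…,m_l`, `α₁,…,α_l`. -/
def scf (n l : ℕ) (p : ℝ) (m : Fin l → ℕ) (α : Fin l → ℝ) (X : Fin n → ℝ) : ℝ :=
  (∑ q, (α q / (n : ℝ) ^ (m q - 1)) * ∑ g : Fin (m q) ↪ Fin n, ∏ k, X (g k)) +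
    Real.log (p / (1 - p)) * ∑ i, |X i|

/-- The discrete derivative `∂ⱼf(X) = (f(X^{j←1}) - f(X^{j←0}))/2`. -/
def dder (n : ℕ) (f : (Fin n → ℝ) → ℝ) (X : Fin n → ℝ) (j : Fin n) : ℝ :=
  (f (Function.update X j 1) - f (Function.update X j 0)) / 2

/-- The polynomial extension of the discrete gradient of the subgraph counting function:
`∂ⱼf(X) = Σ_q (m_q α_q/(2 n^{m_q-1})) C_j^{m_q}(X) + ½ log(p/(1-p))`. -/
def gradf (n l : ℕ) (p : ℝ) (m : Fin l → ℕ) (α : Fin l → ℝ) (X : Fin n → ℝ)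
    (j : Fin n) : ℝ :=
  (∑ q, ((m q : ℝ) * α q / (2 * (n : ℝ) ^ (m q - 1))) * Cvec n (m q) X j) +
    Real.log (p / (1 - p)) / 2

/-- `C_α = max{2, ½|log(p/(1-p))| + ½ Σ_q |α_q| m_q (m_q - 1)}`. -/
def Calpha (l : ℕ) (p : ℝ) (m : Fin l → ℕ) (α : Fin l → ℝ) : ℝ :=
  max 2 (|Real.log (p / (1 - p))| / 2 + (∑ q, |α q| * (m q : ℝ) * ((m q : ℝ) - 1)) / 2)

/-- `Φ(X) = (1ₙ + tanh(∇f(X)))/2`, entrywise. -/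
def Phi (n l : ℕ) (p : ℝ) (m : Fin l → ℕ) (α : Fin l → ℝ) (X : Fin n → ℝ) :
    Fin n → ℝ :=
  fun j => (1 + Real.tanh (gradf n l p m α X j)) / 2

/-- The set `X_f` of near fixed points of `X ↦ (1ₙ + tanh(∇f(X)))/2` in `[0,1]ⁿ`. -/
def Xf (n l : ℕ) (p : ℝ) (m : Fin l → ℕ) (α : Fin l → ℝ) : Set (Fin n → ℝ) :=
  {X | (∀ i, X i ∈ Set.Icc (0:ℝ) 1) ∧
    norm1 n (fun j => X j - Phi n l p m α X j) ≤
      5000 * (Calpha l p m α) ^ 2 * (n : ℝ) ^ ((7:ℝ)/8)}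

/-- The one-dimensional fixed point function `φ_α`. -/
def phiA (n l : ℕ) (p : ℝ) (m : Fin l → ℕ) (α : Fin l → ℝ) (x : ℝ) : ℝ :=
  (1 + Real.tanh (Real.log (p / (1 - p)) / 2 +
    (∑ q, (m q : ℝ) * α q * (∏ i ∈ Finset.Icc 1 (m q - 1), (1 - (i : ℝ) / n)) *
      x ^ (m q - 1)) / 2)) / 2

lemma my_abs_tanh_lt_one (t : ℝ) : |Real.tanh t| < 1 := by
  rw [Real.tanh_eq_sinh_div_cosh, abs_div, abs_of_pos (Real.cosh_pos t),
    div_lt_one (Real.cosh_pos t)]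
  nlinarith [Real.cosh_sq t, sq_abs (Real.sinh t), abs_nonneg (Real.sinh t),
    Real.cosh_pos t]

lemma my_diff_tanh : Differentiable ℝ Real.tanh := by
  have h : Real.tanh = fun x => Real.sinh x / Real.cosh x :=
    funext fun x => Real.tanh_eq_sinh_div_cosh x
  rw [h]
  exact Real.differentiable_sinh.div Real.differentiable_cosh
    fun x => (Real.cosh_pos x).ne'

/-- if `φ_α` is increasing, has a unique fixed point `x ∈ (0,1)` and
`φ_α'(x) < 1`, then `D_α = sup_{y ≠ x} |φ_α(y) - x|/|y - x| < 1`. -/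
theorem stmt9 (n l : ℕ) (hn : 0 < n) (p : ℝ) (hp : p ∈ Set.Ioo (0:ℝ) 1)
    (m : Fin l → ℕ) (hm : ∀ q, 2 ≤ m q) (hminj : Function.Injective m)
    (α : Fin l → ℝ)
    (hmono : MonotoneOn (phiA n l p m α) (Set.Icc 0 1))
    (x : ℝ) (hx : x ∈ Set.Ioo (0:ℝ) 1) (hfix : phiA n l p m α x = x)
    (huniq : ∀ y ∈ Set.Icc (0:ℝ) 1, phiA n l p m α y = y → y = x)
    (hderiv : deriv (phiA n l p m α) x < 1) :
    sSup {r : ℝ | ∃ y ∈ Set.Icc (0:ℝ) 1, y ≠ x ∧ r = |phiA n l p m α y - x| / |y - x|}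
      < 1 := by
  obtain ⟨hx0, hx1⟩ := hx
  set F := phiA n l p m α with hFdef
  have x_mem : x ∈ Set.Icc (0:ℝ) 1 := ⟨hx0.le, hx1.le⟩
  -- differentiability of F
  have hdiffF : Differentiable ℝ F := by
    rw [hFdef]; unfold phiA
    apply Differentiable.div_const
    apply (differentiable_const (1:ℝ)).add
    apply my_diff_tanh.comp
    apply (differentiable_const _).add
    apply Differentiable.div_const
    exact Differentiable.fun_sum fun q _ => (differentiable_pow _).const_mul _
  have hcontF : Continuous F := hdiffF.continuous
  -- range of F is (0,1)
  have hrange : ∀ y : ℝ, F y ∈ Set.Ioo (0:ℝ) 1 := by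
    intro y
    have h := abs_lt.mp (my_abs_tanh_lt_one (Real.log (p / (1 - p)) / 2 +
      (∑ q, (m q : ℝ) * α q * (∏ i ∈ Finset.Icc 1 (m q - 1), (1 - (i : ℝ) / n)) *
        y ^ (m q - 1)) / 2))
    rw [hFdef]; unfold phiA
    constructor
    · linarith [h.1]
    · linarith [h.2]
  -- sign facts
  have hsign_lt : ∀ y ∈ Set.Icc (0:ℝ) 1, y < x → y < F y := by
    intro y hy hyx
    by_contra hcon
    push_neg at hcon
    have hg : ContinuousOn (fun z => F z - z) (Set.Icc 0 y) :=
      (hcontF.sub continuous_id).continuousOn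
    have h0 : (0:ℝ) ∈ Set.Icc ((fun z => F z - z) y) ((fun z => F z - z) 0) := by
      refine ⟨by simpa using hcon, ?_⟩
      simpa using (hrange 0).1.le
    obtain ⟨z, hz, hz0⟩ := intermediate_value_Icc' hy.1 hg h0
    have hzfix : F z = z := by simpa [sub_eq_zero] using hz0
    have hz1 : z ∈ Set.Icc (0:ℝ) 1 := ⟨hz.1, hz.2.trans hy.2⟩
    exact absurd (huniq z hz1 hzfix) (lt_of_le_of_lt hz.2 hyx).ne
  have hsign_gt : ∀ y ∈ Set.Icc (0:ℝ) 1, x < y → F y < y := by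
    intro y hy hyx
    by_contra hcon
    push_neg at hcon
    have hg : ContinuousOn (fun z => F z - z) (Set.Icc y 1) :=
      (hcontF.sub continuous_id).continuousOn
    have h0 : (0:ℝ) ∈ Set.Icc ((fun z => F z - z) 1) ((fun z => F z - z) y) := by
      refine ⟨?_, by simpa using hcon⟩
      simpa using (hrange 1).2.le
    obtain ⟨z, hz, hz0⟩ := intermediate_value_Icc' hy.2 hg h0
    have hzfix : F z = z := by simpa [sub_eq_zero] using hz0
    have hz1 : z ∈ Set.Icc (0:ℝ) 1 := ⟨le_trans hy.1 hz.1, hz.2⟩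
    exact absurd (huniq z hz1 hzfix) (lt_of_lt_of_le hyx hz.1).ne'
  -- pointwise strict ratio bound
  have hratio : ∀ y ∈ Set.Icc (0:ℝ) 1, y ≠ x → |F y - x| < |y - x| := by
    intro y hy hyx
    rcases lt_or_gt_of_ne hyx with h | h
    · have h1 : y < F y := hsign_lt y hy h
      have h2 : F y ≤ x := hfix ▸ hmono hy x_mem h.le
      rw [abs_of_nonpos (by linarith), abs_of_nonpos (by linarith)]
      linarith
    · have h1 : F y < y := hsign_gt y hy h
      have h2 : x ≤ F y := hfix ▸ hmono x_mem hy h.le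
      rw [abs_of_nonneg (by linarith), abs_of_nonneg (by linarith)]
      linarith
  -- derivative facts
  set d := deriv F x with hddef
  have hd : HasDerivAt F d x := (hdiffF x).hasDerivAt
  have hd0 : 0 ≤ d := by
    have hslope : Filter.Tendsto (slope F x) (nhdsWithin x (Set.Ioi x)) (nhds d) :=
      (hasDerivAt_iff_tendsto_slope.mp hd).mono_left
        (nhdsWithin_mono _ fun y hy => Set.mem_compl_singleton_iff.mpr (ne_of_gt hy))
    refine ge_of_tendsto hslope ?_
    filter_upwards [Ioo_mem_nhdsGT_of_mem (Set.mem_Ico.mpr ⟨le_refl x, hx1⟩)] with y hy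
    have hFxy : F x ≤ F y :=
      hmono x_mem ⟨(hx0.trans hy.1).le, hy.2.le⟩ hy.1.le
    rw [slope_def_field]
    exact div_nonneg (by linarith) (by linarith [hy.1])
  have hd1 : d < 1 := hderiv
  -- uniform bound near x
  have hε : (0:ℝ) < (1 - d) / 2 := by linarith
  have hev := (hasDerivAt_iff_isLittleO.mp hd).def hε
  rw [Metric.eventually_nhds_iff] at hev
  obtain ⟨δ, hδ0, hδ⟩ := hev
  have hnear : ∀ y : ℝ, y ≠ x → |y - x| < δ → |F y - x| / |y - x| ≤ (1 + d) / 2 := by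
    intro y hyx hyδ
    have hb := hδ (show dist y x < δ by rwa [Real.dist_eq])
    simp only [smul_eq_mul, Real.norm_eq_abs] at hb
    have habs : |F y - x| ≤ (1 - d) / 2 * |y - x| + d * |y - x| := by
      have h1 : |F y - x| ≤ |F y - F x - (y - x) * d| + |(y - x) * d| := by
        calc |F y - x| = |(F y - F x - (y - x) * d) + (y - x) * d| := by rw [hfix]; ring_nf
        _ ≤ _ := abs_add_le _ _
      have h2 : |(y - x) * d| = d * |y - x| := by
        rw [abs_mul, abs_of_nonneg hd0]; ring
      linarith
    have hpos : 0 < |y - x| := abs_pos.mpr (sub_ne_zero.mpr hyx)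
    rw [div_le_iff₀ hpos]
    calc |F y - x| ≤ (1 - d) / 2 * |y - x| + d * |y - x| := habs
      _ = (1 + d) / 2 * |y - x| := by ring
  -- uniform bound far from x, via compactness
  set K := Set.Icc (0:ℝ) 1 ∩ {y | δ ≤ |y - x|} with hKdef
  have hKc : IsCompact K := by
    apply isCompact_Icc.inter_right
    have : {y : ℝ | δ ≤ |y - x|} = (fun y => |y - x|) ⁻¹' Set.Ici δ := rfl
    rw [this]
    exact isClosed_Ici.preimage ((continuous_id.sub continuous_const).abs)
  have hKne : ∀ y ∈ K, y ≠ x := by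
    intro y hy heq
    have := hy.2
    simp only [heq, sub_self, abs_zero, Set.mem_setOf_eq] at this
    linarith
  have hcontK : ContinuousOn (fun y => |F y - x| / |y - x|) K := by
    apply ContinuousOn.div
    · exact ((hcontF.sub continuous_const).abs).continuousOn
    · exact ((continuous_id.sub continuous_const).abs).continuousOn
    · intro y hy
      exact (abs_pos.mpr (sub_ne_zero.mpr (hKne y hy))).ne'
  obtain ⟨c, hc0, hc1, hcb⟩ : ∃ c, 0 ≤ c ∧ c < 1 ∧
      ∀ y ∈ Set.Icc (0:ℝ) 1, y ≠ x → |F y - x| / |y - x| ≤ c := by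
    by_cases hK : K.Nonempty
    · obtain ⟨y₀, hy₀K, hmax⟩ := hKc.exists_isMaxOn hK hcontK
      refine ⟨max ((1 + d) / 2) (|F y₀ - x| / |y₀ - x|), ?_, ?_, ?_⟩
      · exact le_trans (by linarith) (le_max_left _ _)
      · apply max_lt (by linarith)
        rw [div_lt_one (abs_pos.mpr (sub_ne_zero.mpr (hKne y₀ hy₀K)))]
        exact hratio y₀ hy₀K.1 (hKne y₀ hy₀K)
      · intro y hy hyx
        rcases lt_or_ge (|y - x|) δ with hlt | hge
        · exact le_trans (hnear y hyx hlt) (le_max_left _ _)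
        · exact le_trans (hmax ⟨hy, hge⟩) (le_max_right _ _)
    · refine ⟨(1 + d) / 2, by linarith, by linarith, ?_⟩
      intro y hy hyx
      rcases lt_or_ge (|y - x|) δ with hlt | hge
      · exact hnear y hyx hlt
      · exact absurd ⟨hy, hge⟩ (fun h => hK ⟨y, h⟩)
  refine lt_of_le_of_lt (Real.sSup_le ?_ hc0) hc1
  rintro r ⟨y, hy, hyx, rfl⟩
  exact hcb y hy hyx

end
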